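/- For discrete random variables K, U, Y, Z on finite sets satisfying the Markov chain K → (U, Y) → Z, one has I(K;Y|U) − I(K;Z|U) = I(K;Y|U,Z), and consequently I(K;Y|U) − I(K;Z|U) ≤ H(Y|Z). -/

import Mathlib

open Finset Real

section IT

variable {Ω : Type*} [Fintype Ω]

/-- A probability mass function on a finite sample space. -/
def IsPmf (μ : Ω → ℝ) : Prop := (∀ ω, 0 ≤ μ ω) ∧ ∑ ω, μ ω = 1

/-- Probability that the random variable `X` takes the value `x`. -/
noncomputable def pr (μ : Ω → ℝ) {α : Type*} [DecidableEq α] (X : Ω → α) (x : α) : ℝ :=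
  ∑ ω, if X ω = x then μ ω else 0

/-- Shannon entropy (in nats) of a finitely-valued random variable. -/
noncomputable def ent (μ : Ω → ℝ) {α : Type*} [Fintype α] [DecidableEq α] (X : Ω → α) : ℝ :=
  ∑ x, Real.negMulLog (pr μ X x)

/-- Conditional Shannon entropy `H(X | Y)`. -/
noncomputable def condEnt (μ : Ω → ℝ) {α β : Type*} [Fintype α] [DecidableEq α]
    [Fintype β] [DecidableEq β] (X : Ω → α) (Y : Ω → β) : ℝ :=
  ent μ (fun ω => (X ω, Y ω)) - ent μ Y

/-- Mutual information `I(X;Y)`. -/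
noncomputable def mi (μ : Ω → ℝ) {α β : Type*} [Fintype α] [DecidableEq α]
    [Fintype β] [DecidableEq β] (X : Ω → α) (Y : Ω → β) : ℝ :=
  ent μ X + ent μ Y - ent μ (fun ω => (X ω, Y ω))

/-- Conditional mutual information `I(X;Y|W)`. -/
noncomputable def cmi (μ : Ω → ℝ) {α β γ : Type*} [Fintype α] [DecidableEq α]
    [Fintype β] [DecidableEq β] [Fintype γ] [DecidableEq γ]
    (X : Ω → α) (Y : Ω → β) (W : Ω → γ) : ℝ :=
  condEnt μ X W + condEnt μ Y W - condEnt μ (fun ω => (X ω, Y ω)) W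

/-- Independence of two finitely-valued random variables. -/
def IndepRV (μ : Ω → ℝ) {α β : Type*} [DecidableEq α] [DecidableEq β]
    (X : Ω → α) (Y : Ω → β) : Prop :=
  ∀ x y, pr μ (fun ω => (X ω, Y ω)) (x, y) = pr μ X x * pr μ Y y

/-- `X` is uniformly distributed over its (finite) alphabet. -/
def UniformRV (μ : Ω → ℝ) {α : Type*} [Fintype α] [DecidableEq α] (X : Ω → α) : Prop :=
  ∀ x, pr μ X x = 1 / Fintype.card α

/-- Markov chain `X → Y → Z`. -/
def MarkovRV (μ : Ω → ℝ) {α β γ : Type*} [DecidableEq α] [DecidableEq β] [DecidableEq γ]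
    (X : Ω → α) (Y : Ω → β) (Z : Ω → γ) : Prop :=
  ∀ x y z, pr μ (fun ω => (X ω, Y ω, Z ω)) (x, y, z) * pr μ Y y =
    pr μ (fun ω => (X ω, Y ω)) (x, y) * pr μ (fun ω => (Y ω, Z ω)) (y, z)

/-- Binary entropy function (in nats), with the convention `0 log 0 = 0`. -/
noncomputable def binEnt (x : ℝ) : ℝ := Real.negMulLog x + Real.negMulLog (1 - x)

end IT

section Lemmas
variable {Ω : Type*} [Fintype Ω] {μ : Ω → ℝ}

lemma pr_nonneg (hμ : IsPmf μ) {α : Type*} [DecidableEq α] (X : Ω → α) (x : α) : 0 ≤ pr μ X x :=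
  Finset.sum_nonneg fun ω _ => by by_cases h : X ω = x <;> simp [h, hμ.1 ω]

lemma sum_pr (hμ : IsPmf μ) {α : Type*} [Fintype α] [DecidableEq α] (X : Ω → α) :
    ∑ x, pr μ X x = 1 := by
  unfold pr
  rw [Finset.sum_comm]
  rw [← hμ.2]
  exact Finset.sum_congr rfl fun ω _ => by simp

lemma marg_fst {α β : Type*} [Fintype α] [DecidableEq α] [DecidableEq β]
    (X : Ω → α) (Y : Ω → β) (y : β) :
    ∑ x, pr μ (fun ω => (X ω, Y ω)) (x, y) = pr μ Y y := by
  unfold pr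
  rw [Finset.sum_comm]
  refine Finset.sum_congr rfl fun ω _ => ?_
  simp only [Prod.mk.injEq]
  by_cases h : Y ω = y <;> simp [h]

lemma marg_snd {α β : Type*} [DecidableEq α] [Fintype β] [DecidableEq β]
    (X : Ω → α) (Y : Ω → β) (x : α) :
    ∑ y, pr μ (fun ω => (X ω, Y ω)) (x, y) = pr μ X x := by
  unfold pr
  rw [Finset.sum_comm]
  refine Finset.sum_congr rfl fun ω _ => ?_
  simp only [Prod.mk.injEq]
  by_cases h : X ω = x <;> simp [h]

lemma pr_comp {α α' : Type*} [Fintype α] [DecidableEq α] [DecidableEq α']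
    (X : Ω → α) (f : α → α') (v : α') :
    pr μ (fun ω => f (X ω)) v = ∑ x, if f x = v then pr μ X x else 0 := by
  unfold pr
  have : ∀ x : α, (if f x = v then (∑ ω, if X ω = x then μ ω else 0) else 0)
      = ∑ ω, if f x = v ∧ X ω = x then μ ω else 0 := by
    intro x; by_cases h : f x = v <;> simp [h]
  simp only [this]
  rw [Finset.sum_comm]
  refine Finset.sum_congr rfl fun ω _ => ?_
  rw [Finset.sum_eq_single (X ω)]
  · by_cases h : f (X ω) = v <;> simp [h]
  · intro b _ hb; simp [fun h => hb.symm h]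
  · simp

lemma pr_relabel {α α' : Type*} [DecidableEq α] [DecidableEq α'] {e : α → α'}
    (he : Function.Injective e) (V : Ω → α) (v : α) :
    pr μ (fun ω => e (V ω)) (e v) = pr μ V v :=
  Finset.sum_congr rfl fun ω _ => by simp [he.eq_iff]

lemma pr_le_pr_comp (hμ : IsPmf μ) {α α' : Type*} [Fintype α] [DecidableEq α] [DecidableEq α']
    (T : Ω → α) (f : α → α') (t : α) :
    pr μ T t ≤ pr μ (fun ω => f (T ω)) (f t) := by
  rw [pr_comp T f]
  calc pr μ T t = (if f t = f t then pr μ T t else 0) := by simp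
    _ ≤ ∑ x, if f x = f t then pr μ T x else 0 :=
      Finset.single_le_sum (f := fun x => if f x = f t then pr μ T x else 0) (fun x _ => by by_cases h : f x = f t <;> simp [h, pr_nonneg hμ])
        (Finset.mem_univ t)

lemma sum_pr_mul {α α' : Type*} [Fintype α] [DecidableEq α] [Fintype α'] [DecidableEq α']
    (X : Ω → α) (f : α → α') (G : α' → ℝ) :
    ∑ v, pr μ (fun ω => f (X ω)) v * G v = ∑ t, pr μ X t * G (f t) := by
  simp only [pr_comp, Finset.sum_mul]
  rw [Finset.sum_comm]
  refine Finset.sum_congr rfl fun t _ => ?_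
  rw [Finset.sum_eq_single (f t)]
  · simp
  · intro b _ hb; simp [Ne.symm hb]
  · simp

lemma ent_rep {α α' : Type*} [Fintype α] [DecidableEq α] [Fintype α'] [DecidableEq α']
    (T : Ω → α) (f : α → α') :
    ent μ (fun ω => f (T ω)) = ∑ t, pr μ T t * (-Real.log (pr μ (fun ω => f (T ω)) (f t))) := by
  rw [← sum_pr_mul T f (fun v => -Real.log (pr μ (fun ω => f (T ω)) v))]
  unfold ent
  exact Finset.sum_congr rfl fun v _ => by rw [Real.negMulLog]; ring

lemma ent_inj {α α' : Type*} [Fintype α] [DecidableEq α] [Fintype α'] [DecidableEq α']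
    {e : α → α'} (he : Function.Injective e) (V : Ω → α) (W : Ω → α')
    (hW : ∀ ω, W ω = e (V ω)) : ent μ W = ent μ V := by
  have hWe : W = fun ω => e (V ω) := funext hW
  subst hWe
  unfold ent
  have key : ∀ v' ∈ Finset.univ, v' ∉ Finset.univ.image e →
      Real.negMulLog (pr μ (fun ω => e (V ω)) v') = 0 := by
    intro v' _ hv'
    have : pr μ (fun ω => e (V ω)) v' = 0 := by
      apply Finset.sum_eq_zero
      intro ω _
      have h : e (V ω) ≠ v' := fun h => hv' (Finset.mem_image.2 ⟨V ω, Finset.mem_univ _, h⟩)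
      simp [h]
    simp [this]
  rw [← Finset.sum_subset (Finset.subset_univ (Finset.univ.image e)) key]
  rw [Finset.sum_image (fun x _ y _ h => he h)]
  exact Finset.sum_congr rfl fun v _ => by rw [pr_relabel he]

end Lemmas

lemma negMulLog_sum_le {ι : Type*} (s : Finset ι) (f : ι → ℝ) (hf : ∀ i ∈ s, 0 ≤ f i) :
    Real.negMulLog (∑ i ∈ s, f i) ≤ ∑ i ∈ s, Real.negMulLog (f i) := by
  have key : ∑ i ∈ s, f i * Real.log (f i) ≤ (∑ i ∈ s, f i) * Real.log (∑ i ∈ s, f i) := by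
    rw [Finset.sum_mul]
    refine Finset.sum_le_sum fun i hi => ?_
    rcases eq_or_lt_of_le (hf i hi) with h | h
    · rw [← h]; simp
    · refine mul_le_mul_of_nonneg_left ?_ (hf i hi)
      exact Real.log_le_log h (Finset.single_le_sum hf hi)
  simp only [Real.negMulLog, neg_mul]
  rw [Finset.sum_neg_distrib]
  linarith

section Lemmas2
variable {Ω : Type*} [Fintype Ω] {μ : Ω → ℝ}

lemma ent_snd_le (hμ : IsPmf μ) {α β : Type*} [Fintype α] [DecidableEq α]
    [Fintype β] [DecidableEq β] (X : Ω → α) (Y : Ω → β) :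
    ent μ Y ≤ ent μ (fun ω => (X ω, Y ω)) := by
  unfold ent
  rw [Fintype.sum_prod_type, Finset.sum_comm]
  refine Finset.sum_le_sum fun y _ => ?_
  rw [← marg_fst X Y y]
  exact negMulLog_sum_le _ _ fun x _ => pr_nonneg hμ _ _

end Lemmas2

section LemmasC
variable {Ω : Type*} [Fintype Ω] {μ : Ω → ℝ}

lemma markov_ent {A B C : Type*} [Fintype A] [DecidableEq A] [Fintype B] [DecidableEq B]
    [Fintype C] [DecidableEq C] (hμ : IsPmf μ) (X : Ω → A) (W : Ω → B) (Z : Ω → C)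
    (h : ∀ x w z, pr μ (fun ω => (X ω, W ω, Z ω)) (x, w, z) * pr μ W w =
      pr μ (fun ω => (X ω, W ω)) (x, w) * pr μ (fun ω => (W ω, Z ω)) (w, z)) :
    ent μ (fun ω => (X ω, W ω, Z ω)) - ent μ (fun ω => (W ω, Z ω)) =
      ent μ (fun ω => (X ω, W ω)) - ent μ W := by
  set T : Ω → A × B × C := fun ω => (X ω, W ω, Z ω) with hT
  have R1 : ent μ (fun ω => (X ω, W ω, Z ω)) =
      ∑ t, pr μ T t * (-Real.log (pr μ T t)) := by
    have := ent_rep (μ := μ) T id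
    simpa using this
  have R2 : ent μ (fun ω => (W ω, Z ω)) =
      ∑ t, pr μ T t * (-Real.log (pr μ (fun ω => (W ω, Z ω)) t.2)) :=
    ent_rep (μ := μ) T (fun t => t.2)
  have R3 : ent μ (fun ω => (X ω, W ω)) =
      ∑ t, pr μ T t * (-Real.log (pr μ (fun ω => (X ω, W ω)) (t.1, t.2.1))) :=
    ent_rep (μ := μ) T (fun t => (t.1, t.2.1))
  have R4 : ent μ W = ∑ t, pr μ T t * (-Real.log (pr μ W t.2.1)) :=
    ent_rep (μ := μ) T (fun t => t.2.1)
  have key : ∀ t : A × B × C,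
      pr μ T t * (-Real.log (pr μ T t)) + pr μ T t * (-Real.log (pr μ W t.2.1)) =
      pr μ T t * (-Real.log (pr μ (fun ω => (X ω, W ω)) (t.1, t.2.1))) +
        pr μ T t * (-Real.log (pr μ (fun ω => (W ω, Z ω)) t.2)) := by
    rintro ⟨x, w, z⟩
    rcases eq_or_lt_of_le (pr_nonneg hμ T (x, w, z)) with hq | hq
    · rw [← hq]; ring
    · have ha : 0 < pr μ (fun ω => (X ω, W ω)) (x, w) :=
        lt_of_lt_of_le hq (pr_le_pr_comp hμ T (fun t => (t.1, t.2.1)) (x, w, z))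
      have hb : 0 < pr μ (fun ω => (W ω, Z ω)) (w, z) :=
        lt_of_lt_of_le hq (pr_le_pr_comp hμ T (fun t => t.2) (x, w, z))
      have hc : 0 < pr μ W w :=
        lt_of_lt_of_le hq (pr_le_pr_comp hμ T (fun t => t.2.1) (x, w, z))
      have hM := h x w z
      have hlog : Real.log (pr μ T (x, w, z)) + Real.log (pr μ W w) =
          Real.log (pr μ (fun ω => (X ω, W ω)) (x, w)) +
            Real.log (pr μ (fun ω => (W ω, Z ω)) (w, z)) := by
        rw [← Real.log_mul hq.ne' hc.ne', ← Real.log_mul ha.ne' hb.ne']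
        exact congrArg Real.log hM
      have := hq.ne'
      linear_combination (-(pr μ T (x, w, z))) * hlog
  rw [R1, R2, R3, R4]
  rw [← Finset.sum_sub_distrib, ← Finset.sum_sub_distrib]
  refine Finset.sum_congr rfl fun t _ => ?_
  have := key t
  linarith

end LemmasC

section LemmasB
variable {Ω : Type*} [Fintype Ω] {μ : Ω → ℝ}

lemma submod {A B C : Type*} [Fintype A] [DecidableEq A] [Fintype B] [DecidableEq B]
    [Fintype C] [DecidableEq C] (hμ : IsPmf μ) (X : Ω → A) (Y : Ω → B) (W : Ω → C) :
    ent μ (fun ω => (X ω, Y ω, W ω)) + ent μ W ≤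
      ent μ (fun ω => (X ω, W ω)) + ent μ (fun ω => (Y ω, W ω)) := by
  set T : Ω → A × B × C := fun ω => (X ω, Y ω, W ω) with hT
  set q : A × B × C → ℝ := fun t => pr μ T t with hq
  set a : A × B × C → ℝ := fun t => pr μ (fun ω => (X ω, W ω)) (t.1, t.2.2) with ha
  set b : A × B × C → ℝ := fun t => pr μ (fun ω => (Y ω, W ω)) t.2 with hb
  set c : A × B × C → ℝ := fun t => pr μ W t.2.2 with hc
  have R1 : ent μ T = ∑ t, q t * (-Real.log (q t)) := by
    have := ent_rep (μ := μ) T id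
    simpa using this
  have R2 : ent μ W = ∑ t, q t * (-Real.log (c t)) :=
    ent_rep (μ := μ) T (fun t => t.2.2)
  have R3 : ent μ (fun ω => (X ω, W ω)) = ∑ t, q t * (-Real.log (a t)) :=
    ent_rep (μ := μ) T (fun t => (t.1, t.2.2))
  have R4 : ent μ (fun ω => (Y ω, W ω)) = ∑ t, q t * (-Real.log (b t)) :=
    ent_rep (μ := μ) T (fun t => t.2)
  -- the correction term
  set r : A × B × C → ℝ := fun t => if 0 < q t then a t * b t / c t else 0 with hr
  have step1 : ∀ t, q t * (-Real.log (q t)) + q t * (-Real.log (c t)) ≤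
      q t * (-Real.log (a t)) + q t * (-Real.log (b t)) + (r t - q t) := by
    intro t
    rcases eq_or_lt_of_le (pr_nonneg hμ T t) with hqt | hqt
    · have : q t = 0 := hqt.symm
      simp [hr, this]
    · have hat : 0 < a t := lt_of_lt_of_le hqt (pr_le_pr_comp hμ T (fun t => (t.1, t.2.2)) t)
      have hbt : 0 < b t := lt_of_lt_of_le hqt (pr_le_pr_comp hμ T (fun t => t.2) t)
      have hct : 0 < c t := lt_of_lt_of_le hqt (pr_le_pr_comp hμ T (fun t => t.2.2) t)
      have hrt : r t = a t * b t / c t := if_pos hqt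
      have hratio : 0 < a t * b t / (q t * c t) := by positivity
      have hlog := Real.log_le_sub_one_of_pos hratio
      have hlogeq : Real.log (a t * b t / (q t * c t)) =
          Real.log (a t) + Real.log (b t) - Real.log (q t) - Real.log (c t) := by
        rw [Real.log_div (by positivity) (by positivity), Real.log_mul hat.ne' hbt.ne',
          Real.log_mul hqt.ne' hct.ne']
        ring
      rw [hlogeq] at hlog
      rw [hrt]
      have hmul : q t * (a t * b t / (q t * c t) - 1) = a t * b t / c t - q t := by
        have hq0 : q t ≠ 0 := ne_of_gt hqt
        field_simp
      nlinarith [mul_le_mul_of_nonneg_left hlog (le_of_lt hqt)]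
  have sumq : ∑ t, q t = 1 := sum_pr hμ T
  have step2 : ∑ t, r t ≤ 1 := by
    have h1 : ∀ t, r t ≤ (if 0 < c t then a t * b t / c t else 0) := by
      intro t
      rcases eq_or_lt_of_le (pr_nonneg hμ T t) with hqt | hqt
      · have h0 : q t = 0 := hqt.symm
        simp only [hr, h0, lt_irrefl, if_false]
        split
        · exact div_nonneg (mul_nonneg (pr_nonneg hμ _ _) (pr_nonneg hμ _ _)) (pr_nonneg hμ _ _)
        · exact le_rfl
      · have hqt' : 0 < q t := hqt
        have hct : 0 < c t := lt_of_lt_of_le hqt (pr_le_pr_comp hμ T (fun t => t.2.2) t)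
        rw [if_pos hct]
        exact le_of_eq (if_pos hqt')
    calc ∑ t, r t ≤ ∑ t, (if 0 < c t then a t * b t / c t else 0) :=
          Finset.sum_le_sum fun t _ => h1 t
      _ = ∑ x, ∑ y, ∑ w, (if 0 < pr μ W w then
            pr μ (fun ω => (X ω, W ω)) (x, w) * pr μ (fun ω => (Y ω, W ω)) (y, w) / pr μ W w
            else 0) := by
          rw [Fintype.sum_prod_type]
          exact Finset.sum_congr rfl fun x _ => Fintype.sum_prod_type _
      _ = ∑ x, ∑ w, ∑ y, (if 0 < pr μ W w then
            pr μ (fun ω => (X ω, W ω)) (x, w) * pr μ (fun ω => (Y ω, W ω)) (y, w) / pr μ W w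
            else 0) := Finset.sum_congr rfl (fun x _ => Finset.sum_comm)
      _ = ∑ w, ∑ x, ∑ y, (if 0 < pr μ W w then
            pr μ (fun ω => (X ω, W ω)) (x, w) * pr μ (fun ω => (Y ω, W ω)) (y, w) / pr μ W w
            else 0) := Finset.sum_comm
      _ ≤ ∑ w, pr μ W w := by
          refine Finset.sum_le_sum fun w _ => ?_
          by_cases hcw : 0 < pr μ W w
          · simp only [if_pos hcw]
            have e1 : ∀ x, ∑ y, pr μ (fun ω => (X ω, W ω)) (x, w) *
                pr μ (fun ω => (Y ω, W ω)) (y, w) / pr μ W w =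
                pr μ (fun ω => (X ω, W ω)) (x, w) := by
              intro x
              rw [← Finset.sum_div, ← Finset.mul_sum, marg_fst Y W w]
              field_simp
            simp only [e1]
            rw [marg_fst X W w]
          · simp only [if_neg hcw]
            simp [pr_nonneg hμ W w]
      _ = 1 := sum_pr hμ W
  calc ent μ T + ent μ W
      = ∑ t, (q t * (-Real.log (q t)) + q t * (-Real.log (c t))) := by
        rw [R1, R2, Finset.sum_add_distrib]
    _ ≤ ∑ t, (q t * (-Real.log (a t)) + q t * (-Real.log (b t)) + (r t - q t)) :=
        Finset.sum_le_sum fun t _ => step1 t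
    _ = ent μ (fun ω => (X ω, W ω)) + ent μ (fun ω => (Y ω, W ω)) + (∑ t, r t - ∑ t, q t) := by
        rw [R3, R4]
        rw [Finset.sum_add_distrib, Finset.sum_add_distrib, Finset.sum_sub_distrib]
    _ ≤ ent μ (fun ω => (X ω, W ω)) + ent μ (fun ω => (Y ω, W ω)) := by
        rw [sumq]
        linarith [step2]

end LemmasB

theorem stmt4' {Ω : Type*} [Fintype Ω]
    {α β γ δ : Type*} [Fintype α] [DecidableEq α] [Fintype β] [DecidableEq β]
    [Fintype γ] [DecidableEq γ] [Fintype δ] [DecidableEq δ]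
    (μ : Ω → ℝ) (hμ : IsPmf μ)
    (K : Ω → α) (U : Ω → β) (Y : Ω → γ) (Z : Ω → δ)
    (hMarkov : ∀ x y z, pr μ (fun ω => (K ω, (U ω, Y ω), Z ω)) (x, y, z) * pr μ (fun ω => (U ω, Y ω)) y =
      pr μ (fun ω => (K ω, (U ω, Y ω))) (x, y) * pr μ (fun ω => ((U ω, Y ω), Z ω)) (y, z)) :
    (ent μ (fun ω => (K ω, U ω)) + ent μ (fun ω => (Y ω, U ω)) - ent μ (fun ω => ((K ω, Y ω), U ω)) - ent μ U)
    - (ent μ (fun ω => (K ω, U ω)) + ent μ (fun ω => (Z ω, U ω)) - ent μ (fun ω => ((K ω, Z ω), U ω)) - ent μ U)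
    = (ent μ (fun ω => (K ω, (U ω, Z ω))) + ent μ (fun ω => (Y ω, (U ω, Z ω)))
        - ent μ (fun ω => ((K ω, Y ω), (U ω, Z ω))) - ent μ (fun ω => (U ω, Z ω))) ∧
    (ent μ (fun ω => (K ω, U ω)) + ent μ (fun ω => (Y ω, U ω)) - ent μ (fun ω => ((K ω, Y ω), U ω)) - ent μ U)
    - (ent μ (fun ω => (K ω, U ω)) + ent μ (fun ω => (Z ω, U ω)) - ent μ (fun ω => ((K ω, Z ω), U ω)) - ent μ U)
    ≤ ent μ (fun ω => (Y ω, Z ω)) - ent μ Z := by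
  have star : ent μ (fun ω => (K ω, ((U ω, Y ω), Z ω))) - ent μ (fun ω => ((U ω, Y ω), Z ω)) =
      ent μ (fun ω => (K ω, (U ω, Y ω))) - ent μ (fun ω => (U ω, Y ω)) :=
    markov_ent hμ K (fun ω => (U ω, Y ω)) Z hMarkov
  have hZU : ent μ (fun ω => (U ω, Z ω)) = ent μ (fun ω => (Z ω, U ω)) :=
    ent_inj (e := fun p : δ × β => (p.2, p.1)) (Function.LeftInverse.injective
      (g := fun p : β × δ => (p.2, p.1)) (fun p => rfl)) (fun ω => (Z ω, U ω)) _ (fun ω => rfl)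
  have hKZU : ent μ (fun ω => (K ω, (U ω, Z ω))) = ent μ (fun ω => ((K ω, Z ω), U ω)) :=
    ent_inj (e := fun p : (α × δ) × β => (p.1.1, (p.2, p.1.2)))
      (Function.LeftInverse.injective
        (g := fun q : α × β × δ => ((q.1, q.2.2), q.2.1)) (fun p => rfl))
      (fun ω => ((K ω, Z ω), U ω)) _ (fun ω => rfl)
  have hYU : ent μ (fun ω => (U ω, Y ω)) = ent μ (fun ω => (Y ω, U ω)) :=
    ent_inj (e := fun p : γ × β => (p.2, p.1)) (Function.LeftInverse.injective
      (g := fun p : β × γ => (p.2, p.1)) (fun p => rfl)) (fun ω => (Y ω, U ω)) _ (fun ω => rfl)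
  have hKYU : ent μ (fun ω => (K ω, (U ω, Y ω))) = ent μ (fun ω => ((K ω, Y ω), U ω)) :=
    ent_inj (e := fun p : (α × γ) × β => (p.1.1, (p.2, p.1.2)))
      (Function.LeftInverse.injective
        (g := fun q : α × β × γ => ((q.1, q.2.2), q.2.1)) (fun p => rfl))
      (fun ω => ((K ω, Y ω), U ω)) _ (fun ω => rfl)
  have hUYZ : ent μ (fun ω => ((U ω, Y ω), Z ω)) = ent μ (fun ω => (Y ω, (U ω, Z ω))) :=
    ent_inj (e := fun p : γ × β × δ => ((p.2.1, p.1), p.2.2))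
      (Function.LeftInverse.injective
        (g := fun q : (β × γ) × δ => (q.1.2, (q.1.1, q.2))) (fun p => rfl))
      (fun ω => (Y ω, (U ω, Z ω))) _ (fun ω => rfl)
  have hKUYZ : ent μ (fun ω => (K ω, ((U ω, Y ω), Z ω))) =
      ent μ (fun ω => ((K ω, Y ω), (U ω, Z ω))) :=
    ent_inj (e := fun p : (α × γ) × β × δ => (p.1.1, ((p.2.1, p.1.2), p.2.2)))
      (Function.LeftInverse.injective
        (g := fun q : α × (β × γ) × δ => ((q.1, q.2.1.2), (q.2.1.1, q.2.2))) (fun p => rfl))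
      (fun ω => ((K ω, Y ω), (U ω, Z ω))) _ (fun ω => rfl)
  have h7 : ent μ (fun ω => ((K ω, Y ω), (U ω, Z ω))) =
      ent μ (fun ω => (Y ω, (K ω, (U ω, Z ω)))) :=
    ent_inj (e := fun p : γ × α × β × δ => ((p.2.1, p.1), p.2.2))
      (Function.LeftInverse.injective
        (g := fun q : (α × γ) × β × δ => (q.1.2, (q.1.1, q.2))) (fun p => rfl))
      (fun ω => (Y ω, (K ω, (U ω, Z ω)))) _ (fun ω => rfl)
  have hA : ent μ (fun ω => (K ω, (U ω, Z ω))) ≤ ent μ (fun ω => (Y ω, (K ω, (U ω, Z ω)))) :=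
    ent_snd_le hμ Y (fun ω => (K ω, (U ω, Z ω)))
  have hB : ent μ (fun ω => (Y ω, (U ω, Z ω))) + ent μ Z ≤
      ent μ (fun ω => (Y ω, Z ω)) + ent μ (fun ω => (U ω, Z ω)) := submod hμ Y U Z
  constructor
  · linarith
  · linarith

theorem stmt4 {Ω : Type*} [Fintype Ω]
    {α β γ δ : Type*} [Fintype α] [DecidableEq α] [Fintype β] [DecidableEq β]
    [Fintype γ] [DecidableEq γ] [Fintype δ] [DecidableEq δ]
    (μ : Ω → ℝ) (hμ : IsPmf μ)
    (K : Ω → α) (U : Ω → β) (Y : Ω → γ) (Z : Ω → δ)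
    (hMarkov : MarkovRV μ K (fun ω => (U ω, Y ω)) Z) :
    cmi μ K Y U - cmi μ K Z U = cmi μ K Y (fun ω => (U ω, Z ω)) ∧
    cmi μ K Y U - cmi μ K Z U ≤ condEnt μ Y Z := by
  obtain ⟨h1, h2⟩ := stmt4' μ hμ K U Y Z hMarkov
  constructor
  · simp only [cmi, condEnt]
    linarith
  · simp only [cmi, condEnt]
    linarith
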